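/- arXiv:2410.22498 — 5 statements merged into one kernel-verified Lean document; each statement's English description precedes it below -/
import Mathlib

section
/- Let b ∈ (0,1) and let (B_k)_{k≥0} be i.i.d. real random variables with E[max(0, ln|B_0|)] < ∞. Then the series Σ_{k=0}^∞ b^k B_k converges almost surely. -/
open MeasureTheory ProbabilityTheory

/-- Let `b ∈ (0,1)` and let `(B_k)_{k ≥ 0}` be i.i.d. real random variables with
`E[max(0, ln|B_0|)] < ∞`. Then the series `Σ_{k=0}^∞ b^k B_k` converges almost surely. -/
theorem summable_geometric_iid_of_integrable_pos_log
    {Ω : Type*} [MeasureSpace Ω] [IsProbabilityMeasure (ℙ : Measure Ω)]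
    (b : ℝ) (hb : b ∈ Set.Ioo (0 : ℝ) 1)
    (B : ℕ → Ω → ℝ) (hmeas : ∀ k, Measurable (B k))
    (hindep : iIndepFun B ℙ)
    (hident : ∀ k, Measure.map (B k) ℙ = Measure.map (B 0) ℙ)
    (hlog : Integrable (fun ω => max 0 (Real.log |B 0 ω|)) ℙ) :
    ∀ᵐ ω ∂ℙ, Summable (fun k => b ^ k * B k ω) := by
  obtain ⟨hb0, hb1⟩ := hb
  set r := Real.sqrt b with hr
  have hr0 : 0 < r := Real.sqrt_pos.2 hb0
  have hr1 : r < 1 := by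
    rw [hr, show (1:ℝ) = Real.sqrt 1 by simp]
    exact Real.sqrt_lt_sqrt hb0.le hb1
  set ε : ℝ := -Real.log r with hε
  have hε0 : 0 < ε := by
    rw [hε]
    simp only [neg_pos]
    exact Real.log_neg hr0 hr1
  have hexpε : Real.exp ε = 1 / r := by
    rw [hε, Real.exp_neg, Real.exp_log hr0, one_div]
  have hbr : b * Real.exp ε = r := by
    rw [hexpε]
    field_simp
    rw [hr, Real.sq_sqrt hb0.le]
  -- The scaled log⁺ variable
  have hZ : Integrable (fun ω => ε⁻¹ * max 0 (Real.log |B 0 ω|)) ℙ := hlog.const_mul _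
  have hZnonneg : 0 ≤ fun ω => ε⁻¹ * max 0 (Real.log |B 0 ω|) := by
    intro ω
    exact mul_nonneg (inv_nonneg.2 hε0.le) (le_max_left _ _)
  have htsum := tsum_prob_mem_Ioi_lt_top hZ hZnonneg
  -- events
  have key : ∀ k j : ℕ, ℙ {ω | max 0 (Real.log |B k ω|) > ε * j}
      = ℙ {ω | (fun ω => ε⁻¹ * max 0 (Real.log |B 0 ω|)) ω ∈ Set.Ioi (j : ℝ)} := by
    intro k j
    have hms : MeasurableSet {x : ℝ | max 0 (Real.log |x|) > ε * j} := by
      apply measurableSet_lt measurable_const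
      exact (measurable_const.max (Real.measurable_log.comp measurable_abs))
    have h1 : {ω | max 0 (Real.log |B k ω|) > ε * j}
        = B k ⁻¹' {x | max 0 (Real.log |x|) > ε * j} := rfl
    have h2 : {ω | (fun ω => ε⁻¹ * max 0 (Real.log |B 0 ω|)) ω ∈ Set.Ioi (j : ℝ)}
        = B 0 ⁻¹' {x | max 0 (Real.log |x|) > ε * j} := by
      ext ω
      simp only [Set.mem_setOf_eq, Set.mem_Ioi, Set.mem_preimage, gt_iff_lt]
      rw [lt_inv_mul_iff₀ hε0]
    rw [h1, h2, ← Measure.map_apply (hmeas k) hms, ← Measure.map_apply (hmeas 0) hms, hident k]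
  have hsum_ne : (∑' k : ℕ, ℙ {ω | max 0 (Real.log |B k ω|) > ε * k}) ≠ ⊤ := by
    rw [tsum_congr (fun k => key k k)]
    exact htsum.ne
  have hae := MeasureTheory.ae_finite_setOf_mem (μ := (ℙ : Measure Ω))
    (s := fun k => {ω | max 0 (Real.log |B k ω|) > ε * k}) hsum_ne
  filter_upwards [hae] with ω hω
  apply Summable.of_norm_bounded_eventually (g := fun k => r ^ k)
    (summable_geometric_of_lt_one hr0.le hr1)
  have hcof : {k : ℕ | ω ∈ {ω | max 0 (Real.log |B k ω|) > ε * k}}ᶜ ∈ Filter.cofinite :=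
    hω.compl_mem_cofinite
  filter_upwards [hcof] with k hk
  simp only [Set.mem_compl_iff, Set.mem_setOf_eq, not_lt] at hk
  have hBk : |B k ω| ≤ Real.exp (ε * k) := by
    rcases eq_or_ne (B k ω) 0 with h0 | h0
    · rw [h0]; simp [Real.exp_pos (ε * k) |>.le]
    · have : Real.log |B k ω| ≤ ε * k := (le_max_right _ _).trans hk
      calc |B k ω| = Real.exp (Real.log |B k ω|) :=
            (Real.exp_log (abs_pos.2 h0)).symm
        _ ≤ Real.exp (ε * k) := Real.exp_le_exp.2 this
  calc ‖b ^ k * B k ω‖ = b ^ k * |B k ω| := by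
        rw [norm_mul, Real.norm_eq_abs, Real.norm_eq_abs, abs_pow, abs_of_pos hb0]
    _ ≤ b ^ k * Real.exp (ε * k) := by
        exact mul_le_mul_of_nonneg_left hBk (pow_nonneg hb0.le k)
    _ = (b * Real.exp ε) ^ k := by
        rw [mul_pow, ← Real.exp_nat_mul, mul_comm (k : ℝ) ε]
    _ = r ^ k := by rw [hbr]
end

section
/- Let α, a, c be real constants, β ∈ (0,1), b ∈ (0,1), and let (Z, W) be a random vector in ℝ² whose law has a Lebesgue density that is strictly positive everywhere on ℝ². Fix (v, r) ∈ (0,∞) × ℝ and set V₁ = exp(α + β ln v + W), R₁ = a + b r + c V₁ + V₁ Z. Then for every Borel set A ⊆ (0,∞) × ℝ of positive Lebesgue measure, P((V₁, R₁) ∈ A) > 0. -/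
open MeasureTheory ProbabilityTheory

/-- Let `α, a, c` be real constants, `β ∈ (0,1)`, `b ∈ (0,1)`, and let `(Z, W)` be a random
vector in `ℝ²` whose law has an everywhere strictly positive Lebesgue density. Fix
`(v, r) ∈ (0,∞) × ℝ` and set `V₁ = exp(α + β ln v + W)`, `R₁ = a + b r + c V₁ + V₁ Z`.
Then every Borel set `A ⊆ (0,∞) × ℝ` of positive Lebesgue measure satisfies
`P((V₁, R₁) ∈ A) > 0`. -/
theorem pos_prob_of_pos_leb_two_dim
    {Ω : Type*} [MeasureSpace Ω] [IsProbabilityMeasure (ℙ : Measure Ω)]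
    (α a c β b : ℝ) (hβ : β ∈ Set.Ioo (0 : ℝ) 1) (hb : b ∈ Set.Ioo (0 : ℝ) 1)
    (Z W : Ω → ℝ) (hZW : Measurable fun ω => (Z ω, W ω))
    (f : ℝ × ℝ → ℝ) (hf : Measurable f) (hfpos : ∀ x, 0 < f x)
    (hdens : Measure.map (fun ω => (Z ω, W ω)) ℙ
      = volume.withDensity fun x => ENNReal.ofReal (f x))
    (v r : ℝ) (hv : 0 < v) :
    ∀ A : Set (ℝ × ℝ), MeasurableSet A → A ⊆ Set.Ioi 0 ×ˢ Set.univ → 0 < volume A →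
      0 < ℙ {ω | (Real.exp (α + β * Real.log v + W ω),
        a + b * r + c * Real.exp (α + β * Real.log v + W ω)
          + Real.exp (α + β * Real.log v + W ω) * Z ω) ∈ A} := by
  intro A hA hAsub hApos
  set κ : ℝ := α + β * Real.log v with hκ
  set g : ℝ × ℝ → ℝ × ℝ :=
    fun p => (Real.exp (κ + p.2),
      a + b * r + c * Real.exp (κ + p.2) + Real.exp (κ + p.2) * p.1) with hg
  have hgmeas : Measurable g := by
    apply Measurable.prod
    · exact (Real.measurable_exp.comp (measurable_const.add measurable_snd))
    · exact Measurable.add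
        (measurable_const.add
          ((Real.measurable_exp.comp (measurable_const.add measurable_snd)).const_mul c))
        ((Real.measurable_exp.comp (measurable_const.add measurable_snd)).mul measurable_fst)
  have hgdiff : Differentiable ℝ g := by
    apply Differentiable.prodMk
    · exact (Real.differentiable_exp.comp ((differentiable_const _).add differentiable_snd))
    · exact Differentiable.add
        ((differentiable_const _).add
          ((Real.differentiable_exp.comp
            ((differentiable_const _).add differentiable_snd)).const_mul c))
        ((Real.differentiable_exp.comp
          ((differentiable_const _).add differentiable_snd)).mul differentiable_fst)
  -- the event equals the preimage
  have hset : {ω | (Real.exp (α + β * Real.log v + W ω),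
        a + b * r + c * Real.exp (α + β * Real.log v + W ω)
          + Real.exp (α + β * Real.log v + W ω) * Z ω) ∈ A}
      = (fun ω => (Z ω, W ω)) ⁻¹' (g ⁻¹' A) := rfl
  rw [hset, ← Measure.map_apply hZW (hgmeas hA), hdens,
    withDensity_apply _ (hgmeas hA)]
  -- A is contained in the image of its preimage
  have hrange : A ⊆ g '' (g ⁻¹' A) := by
    intro p hp
    obtain ⟨hp1, -⟩ := hAsub hp
    have hu : (0 : ℝ) < p.1 := hp1
    have he : Real.exp (κ + (Real.log p.1 - κ)) = p.1 := by
      rw [add_sub_cancel, Real.exp_log hu]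
    have hgq : g ((p.2 - a - b * r - c * p.1) / p.1, Real.log p.1 - κ) = p := by
      simp only [hg, he]
      rw [Prod.ext_iff]
      refine ⟨rfl, ?_⟩
      show a + b * r + c * p.1 + p.1 * ((p.2 - a - b * r - c * p.1) / p.1) = p.2
      field_simp
      ring
    exact ⟨_, by rw [Set.mem_preimage, hgq]; exact hp, hgq⟩
  -- the preimage has positive volume
  have hpre : 0 < volume (g ⁻¹' A) := by
    by_contra h
    push_neg at h
    have h0 : volume (g ⁻¹' A) = 0 := le_antisymm h zero_le
    have : volume (g '' (g ⁻¹' A)) = 0 :=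
      MeasureTheory.addHaar_image_eq_zero_of_differentiableOn_of_addHaar_eq_zero
        volume (hgdiff.differentiableOn) h0
    exact absurd (measure_mono_null hrange this) hApos.ne'
  -- positive lintegral of a positive density on a positive-measure set
  rcases eq_or_lt_of_le (zero_le : (0 : ENNReal) ≤ ∫⁻ x in g ⁻¹' A, ENNReal.ofReal (f x)) with h0 | h0
  · exfalso
    have hae := (setLIntegral_eq_zero_iff (hgmeas hA) (hf.ennreal_ofReal)).mp h0.symm
    have h2 : ∀ᵐ x ∂(volume : Measure (ℝ × ℝ)), x ∉ g ⁻¹' A := by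
      filter_upwards [hae] with x hx hmem
      exact absurd (hx hmem) (ENNReal.ofReal_pos.mpr (hfpos x)).ne'
    have : volume (g ⁻¹' A) = 0 := by
      rwa [← MeasureTheory.measure_eq_zero_iff_ae_notMem] at h2
    exact absurd this hpre.ne'
  · exact h0
end

section
/- Let α, a, c, k, m, h, l be real constants, β ∈ (0,1), b ∈ (0,1), and let (U, Z, W) be a random vector in ℝ³ whose law has a Lebesgue density that is strictly positive everywhere on ℝ³. Fix (v, r, q) ∈ (0,∞) × ℝ × ℝ and set V₁ = exp(α + β ln v + W), R₁ = a + b r + c V₁ + V₁ Z, Q₁ = k r − m(R₁ − r) + h V₁ + l + V₁ U. Then for every Borel set A ⊆ (0,∞) × ℝ × ℝ of positive Lebesgue measure, P((V₁, R₁, Q₁) ∈ A) > 0. -/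
open MeasureTheory ProbabilityTheory

/-- Let `α, a, c, k, m, h, l` be real constants, `β ∈ (0,1)`, `b ∈ (0,1)`, and let
`(U, Z, W)` be a random vector in `ℝ³` whose law has an everywhere strictly positive
Lebesgue density. Fix `(v, r, q) ∈ (0,∞) × ℝ × ℝ` and set `V₁ = exp(α + β ln v + W)`,
`R₁ = a + b r + c V₁ + V₁ Z`, `Q₁ = k r − m(R₁ − r) + h V₁ + l + V₁ U`. Then every Borel set
`A ⊆ (0,∞) × ℝ × ℝ` of positive Lebesgue measure satisfies `P((V₁, R₁, Q₁) ∈ A) > 0`. -/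
theorem pos_prob_of_pos_leb_three_dim
    {Ω : Type*} [MeasureSpace Ω] [IsProbabilityMeasure (ℙ : Measure Ω)]
    (α a c k m h l β b : ℝ) (hβ : β ∈ Set.Ioo (0 : ℝ) 1) (hb : b ∈ Set.Ioo (0 : ℝ) 1)
    (U Z W : Ω → ℝ) (hUZW : Measurable fun ω => (U ω, Z ω, W ω))
    (f : ℝ × ℝ × ℝ → ℝ) (hf : Measurable f) (hfpos : ∀ x, 0 < f x)
    (hdens : Measure.map (fun ω => (U ω, Z ω, W ω)) ℙ
      = volume.withDensity fun x => ENNReal.ofReal (f x))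
    (v r q : ℝ) (hv : 0 < v) :
    ∀ A : Set (ℝ × ℝ × ℝ), MeasurableSet A →
      A ⊆ Set.Ioi 0 ×ˢ (Set.univ : Set (ℝ × ℝ)) → 0 < volume A →
      0 < ℙ {ω | (Real.exp (α + β * Real.log v + W ω),
        a + b * r + c * Real.exp (α + β * Real.log v + W ω)
          + Real.exp (α + β * Real.log v + W ω) * Z ω,
        k * r - m * ((a + b * r + c * Real.exp (α + β * Real.log v + W ω)
            + Real.exp (α + β * Real.log v + W ω) * Z ω) - r)
          + h * Real.exp (α + β * Real.log v + W ω) + l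
          + Real.exp (α + β * Real.log v + W ω) * U ω) ∈ A} := by
  intro A hA hAsub hApos
  haveI : (volume : Measure (ℝ × ℝ × ℝ)).IsAddHaarMeasure :=
    (Measure.prod.instIsAddHaarMeasure _ _ : ((volume : Measure ℝ).prod
      ((volume : Measure ℝ).prod (volume : Measure ℝ))).IsAddHaarMeasure)
  set g : ℝ := α + β * Real.log v with hg
  set T : ℝ × ℝ × ℝ → ℝ × ℝ × ℝ := fun p =>
    (Real.exp (g + p.2.2),
     a + b * r + c * Real.exp (g + p.2.2) + Real.exp (g + p.2.2) * p.2.1,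
     k * r - m * ((a + b * r + c * Real.exp (g + p.2.2) + Real.exp (g + p.2.2) * p.2.1) - r)
       + h * Real.exp (g + p.2.2) + l + Real.exp (g + p.2.2) * p.1) with hT
  have he : ContDiff ℝ 1 (fun p : ℝ × ℝ × ℝ => Real.exp (g + p.2.2)) :=
    Real.contDiff_exp.comp (contDiff_const.add (contDiff_snd.comp contDiff_snd))
  have hTcont : ContDiff ℝ 1 T := by
    refine ContDiff.prodMk ?_ (ContDiff.prodMk ?_ ?_)
    · exact he
    · exact (contDiff_const.add (contDiff_const.mul he)).add
        (he.mul (contDiff_fst.comp contDiff_snd))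
    · exact (((contDiff_const.sub (contDiff_const.mul
        (((contDiff_const.add (contDiff_const.mul he)).add
          (he.mul (contDiff_fst.comp contDiff_snd))).sub contDiff_const))).add
        (contDiff_const.mul he)).add contDiff_const).add (he.mul contDiff_fst)
  have hTmeas : Measurable T := hTcont.continuous.measurable
  have hs : MeasurableSet (T ⁻¹' A) := hTmeas hA
  have hvolpre : 0 < volume (T ⁻¹' A) := by
    by_contra hc
    push_neg at hc
    have h0 : volume (T ⁻¹' A) = 0 := le_antisymm hc zero_le
    have himg : A ⊆ T '' (T ⁻¹' A) := by
      rintro ⟨x, y, w⟩ hp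
      have hx : 0 < x := (hAsub hp).1
      have hxne : x ≠ 0 := ne_of_gt hx
      have hTq : T ((w - (k * r - m * (y - r) + h * x + l)) / x,
          (y - (a + b * r + c * x)) / x, Real.log x - g) = (x, y, w) := by
        simp only [hT]
        rw [add_sub_cancel, Real.exp_log hx]
        have h2 : a + b * r + c * x + x * ((y - (a + b * r + c * x)) / x) = y := by
          field_simp
          ring
        rw [h2]
        have h3 : k * r - m * (y - r) + h * x + l
            + x * ((w - (k * r - m * (y - r) + h * x + l)) / x) = w := by
          field_simp
          ring
        rw [h3]
      exact ⟨_, by rw [Set.mem_preimage, hTq]; exact hp, hTq⟩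
    have hbound := MeasureTheory.addHaar_image_le_lintegral_abs_det_fderiv
      (volume : Measure (ℝ × ℝ × ℝ)) hs
      (fun x _ => ((hTcont.differentiable one_ne_zero) x).hasFDerivAt.hasFDerivWithinAt)
    rw [setLIntegral_measure_zero _ _ h0] at hbound
    have : volume A = 0 :=
      le_antisymm (le_trans (measure_mono himg) hbound) zero_le
    exact absurd this hApos.ne'
  have key : ℙ {ω | (Real.exp (g + W ω),
        a + b * r + c * Real.exp (g + W ω) + Real.exp (g + W ω) * Z ω,
        k * r - m * ((a + b * r + c * Real.exp (g + W ω) + Real.exp (g + W ω) * Z ω) - r)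
          + h * Real.exp (g + W ω) + l + Real.exp (g + W ω) * U ω) ∈ A}
      = ∫⁻ x in T ⁻¹' A, ENNReal.ofReal (f x) := by
    have hset : {ω | (Real.exp (g + W ω),
        a + b * r + c * Real.exp (g + W ω) + Real.exp (g + W ω) * Z ω,
        k * r - m * ((a + b * r + c * Real.exp (g + W ω) + Real.exp (g + W ω) * Z ω) - r)
          + h * Real.exp (g + W ω) + l + Real.exp (g + W ω) * U ω) ∈ A}
        = (fun ω => (U ω, Z ω, W ω)) ⁻¹' (T ⁻¹' A) := rfl
    rw [hset, ← Measure.map_apply hUZW hs, hdens, withDensity_apply _ hs]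
  rw [key]
  by_contra hc
  push_neg at hc
  have h0 : ∫⁻ x in T ⁻¹' A, ENNReal.ofReal (f x) = 0 := le_antisymm hc zero_le
  rw [lintegral_eq_zero_iff hf.ennreal_ofReal] at h0
  rw [Filter.EventuallyEq, ae_iff] at h0
  have huniv : {x | ¬ ENNReal.ofReal (f x) = (0 : ℝ × ℝ × ℝ → ENNReal) x} = Set.univ := by
    ext x
    simp [ENNReal.ofReal_eq_zero, not_le, hfpos x]
  rw [huniv, Measure.restrict_apply_univ] at h0
  exact absurd h0 hvolpre.ne'
end

section
/- Let b ∈ (0,1) and let (B_t)_{t∈ℤ} be i.i.d. real random variables with E[max(0, ln|B_0|)] < ∞. Then for each t the series R_t = Σ_{k=0}^∞ b^k B_{t−k} converges almost surely, the process (R_t)_{t∈ℤ} is strictly stationary, and it satisfies the recursion R_t = b R_{t−1} + B_t for all t almost surely. -/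
open MeasureTheory ProbabilityTheory Filter

section Aux

/-- A countable sum of measurable real functions is measurable. -/
lemma measurable_tsum_real {β : Type*} [MeasurableSpace β] {f : ℕ → β → ℝ}
    (hf : ∀ n, Measurable (f n)) : Measurable (fun x => ∑' n, f n x) := by
  classical
  have hsum : ∀ s : Finset ℕ, Measurable fun x => ∑ i ∈ s, f i x :=
    fun s => Finset.measurable_sum s (fun i _ => hf i)
  have hS : MeasurableSet {x | Summable fun n => f n x} := by
    have hEq : {x | Summable fun n => f n x} =
        ⋂ k : ℕ, ⋃ N : Finset ℕ, ⋂ s : Finset ℕ, ⋂ (_ : N ⊆ s),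
          {x | |(∑ i ∈ s, f i x) - ∑ i ∈ N, f i x| < 1 / ((k : ℝ) + 1)} := by
      ext x
      simp only [Set.mem_iInter, Set.mem_iUnion, Set.mem_setOf_eq]
      constructor
      · intro hx k
        have hc := summable_iff_cauchySeq_finset.1 hx
        rcases Metric.cauchySeq_iff'.1 hc (1 / ((k : ℝ) + 1)) (by positivity) with ⟨N, hN⟩
        exact ⟨N, fun s hs => by simpa [Real.dist_eq] using hN s (Finset.le_iff_subset.2 hs)⟩
      · intro hx
        refine summable_iff_cauchySeq_finset.2 (Metric.cauchySeq_iff'.2 ?_)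
        intro ε hε
        rcases exists_nat_one_div_lt hε with ⟨k, hk⟩
        rcases hx k with ⟨N, hN⟩
        refine ⟨N, fun s hs => ?_⟩
        have := hN s (Finset.le_iff_subset.1 hs)
        rw [Real.dist_eq]
        exact this.trans hk
    rw [hEq]
    refine MeasurableSet.iInter fun k => MeasurableSet.iUnion fun N =>
      MeasurableSet.iInter fun s => MeasurableSet.iInter fun _ => ?_
    exact measurableSet_lt ((hsum s).sub (hsum N)).abs measurable_const
  set g : ℕ → β → ℝ := fun n =>
    ({x | Summable fun m => f m x}).piecewise (fun x => ∑ i ∈ Finset.range n, f i x) 0 with hg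
  have hgm : ∀ n, Measurable (g n) :=
    fun n => Measurable.piecewise hS (hsum _) measurable_const
  have hlim : Filter.Tendsto g atTop (nhds (fun x => ∑' n, f n x)) := by
    rw [tendsto_pi_nhds]
    intro x
    by_cases hx : Summable fun m => f m x
    · have : ∀ n, g n x = ∑ i ∈ Finset.range n, f i x := fun n =>
        Set.piecewise_eq_of_mem _ _ _ hx
      simp only [this]
      exact hx.hasSum.tendsto_sum_nat
    · have : ∀ n, g n x = 0 := fun n => Set.piecewise_eq_of_notMem _ _ _ hx
      simp only [this, tsum_eq_zero_of_not_summable hx]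
      exact tendsto_const_nhds
  exact measurable_of_tendsto_metrizable hgm hlim

variable {Ω : Type*} [MeasureSpace Ω] [IsProbabilityMeasure (ℙ : Measure Ω)]

/-- Independence is preserved under injective reindexing. -/
lemma iIndepFun_reindex {ι' : Type*} (B : ℤ → Ω → ℝ)
    (hindep : iIndepFun B ℙ)
    {u : ι' → ℤ} (hu : Function.Injective u) :
    iIndepFun (fun i => B (u i)) ℙ := by
  classical
  rw [iIndepFun_iff_measure_inter_preimage_eq_mul] at hindep ⊢
  intro S sets hsets
  set sets' : ℤ → Set ℝ := fun j =>
    if h : ∃ i ∈ S, u i = j then sets h.choose else Set.univ with hsets'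
  have key : ∀ i ∈ S, sets' (u i) = sets i := by
    intro i hi
    have h : ∃ i' ∈ S, u i' = u i := ⟨i, hi, rfl⟩
    have hch := h.choose_spec
    have : h.choose = i := hu hch.2
    simp only [hsets', dif_pos h, this]
  have hsets'm : ∀ j ∈ S.image u, MeasurableSet (sets' j) := by
    intro j hj
    rcases Finset.mem_image.1 hj with ⟨i, hi, rfl⟩
    rw [key i hi]
    exact hsets i hi
  have h1 : (⋂ j ∈ S.image u, B j ⁻¹' sets' j) = ⋂ i ∈ S, (fun ω => B (u i) ω) ⁻¹' sets i := by
    rw [Finset.set_biInter_finset_image]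
    exact Set.iInter₂_congr fun i hi => by rw [key i hi]
  have h2 := hindep (S.image u) hsets'm
  rw [h1] at h2
  rw [h2, Finset.prod_image (fun i hi j hj hij => hu hij)]
  exact Finset.prod_congr rfl fun i hi => by rw [key i hi]

/-- Finite-dimensional distributions of an i.i.d. family are invariant under injective
reindexings. -/
lemma finite_law_eq (B : ℤ → Ω → ℝ) (hmeas : ∀ t, Measurable (B t))
    (hindep : iIndepFun B ℙ)
    (hident : ∀ t, Measure.map (B t) ℙ = Measure.map (B 0) ℙ)
    {σ τ : ℕ → ℤ} (hσ : Function.Injective σ) (hτ : Function.Injective τ) (s : Finset ℕ) :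
    Measure.map (fun ω => fun i : s => B (σ i) ω) ℙ =
      Measure.map (fun ω => fun i : s => B (τ i) ω) ℙ := by
  have hfσ : Measurable (fun ω => fun i : s => B (σ i) ω) :=
    measurable_pi_lambda _ fun i => hmeas _
  have hfτ : Measurable (fun ω => fun i : s => B (τ i) ω) :=
    measurable_pi_lambda _ fun i => hmeas _
  haveI : IsProbabilityMeasure (Measure.map (fun ω => fun i : s => B (σ i) ω) ℙ) :=
    Measure.isProbabilityMeasure_map hfσ.aemeasurable
  haveI : IsProbabilityMeasure (Measure.map (fun ω => fun i : s => B (τ i) ω) ℙ) :=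
    Measure.isProbabilityMeasure_map hfτ.aemeasurable
  have key : ∀ (u : ℕ → ℤ), Function.Injective u → ∀ (t : (i : s) → Set ℝ),
      (∀ i : s, MeasurableSet (t i)) →
      ℙ ((fun ω => fun i : s => B (u i) ω) ⁻¹' Set.pi Set.univ t)
        = ∏ i : s, (Measure.map (B 0) ℙ) (t i) := by
    intro u hu t ht
    have hpre : (fun ω => fun i : s => B (u i) ω) ⁻¹' Set.pi Set.univ t
        = ⋂ i : s, B (u i) ⁻¹' t i := by
      ext ω
      simp [Set.mem_pi, Set.mem_iInter]
    rw [hpre]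
    have hind' := iIndepFun_reindex B hindep (u := fun i : s => u (i : ℕ))
      (hu.comp Subtype.val_injective)
    have := hind'.meas_iInter (s := fun i : s => B (u i) ⁻¹' t i)
      (fun i => ⟨t i, ht i, rfl⟩)
    rw [this]
    refine Finset.prod_congr rfl fun i _ => ?_
    rw [← Measure.map_apply (hmeas _) (ht i), hident]
  refine MeasureTheory.ext_of_generate_finite _ generateFrom_pi.symm isPiSystem_pi ?_ (by simp)
  rintro _ ⟨t, ht, rfl⟩
  have ht' : ∀ i : s, MeasurableSet (t i) := fun i => ht i (Set.mem_univ i)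
  rw [Measure.map_apply hfσ (MeasurableSet.univ_pi ht'),
    Measure.map_apply hfτ (MeasurableSet.univ_pi ht'),
    key σ hσ t ht', key τ hτ t ht']

/-- The law of an i.i.d. sequence is invariant under injective reindexings. -/
lemma seq_law_eq (B : ℤ → Ω → ℝ) (hmeas : ∀ t, Measurable (B t))
    (hindep : iIndepFun B ℙ)
    (hident : ∀ t, Measure.map (B t) ℙ = Measure.map (B 0) ℙ)
    {σ τ : ℕ → ℤ} (hσ : Function.Injective σ) (hτ : Function.Injective τ) :
    Measure.map (fun ω => fun m : ℕ => B (σ m) ω) ℙ =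
      Measure.map (fun ω => fun m : ℕ => B (τ m) ω) ℙ := by
  have hfσ : Measurable (fun ω => fun m : ℕ => B (σ m) ω) :=
    measurable_pi_lambda _ fun m => hmeas _
  have hfτ : Measurable (fun ω => fun m : ℕ => B (τ m) ω) :=
    measurable_pi_lambda _ fun m => hmeas _
  haveI : IsProbabilityMeasure (Measure.map (fun ω => fun m : ℕ => B (σ m) ω) ℙ) :=
    Measure.isProbabilityMeasure_map hfσ.aemeasurable
  haveI : IsProbabilityMeasure (Measure.map (fun ω => fun m : ℕ => B (τ m) ω) ℙ) :=
    Measure.isProbabilityMeasure_map hfτ.aemeasurable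
  refine MeasureTheory.ext_of_generate_finite _ generateFrom_measurableCylinders.symm
    isPiSystem_measurableCylinders ?_ (by simp)
  intro A hA
  obtain ⟨s, S, hS, rfl⟩ := (mem_measurableCylinders _).1 hA
  have hgσ : Measurable (fun ω => fun i : s => B (σ i) ω) :=
    measurable_pi_lambda _ fun i => hmeas _
  have hgτ : Measurable (fun ω => fun i : s => B (τ i) ω) :=
    measurable_pi_lambda _ fun i => hmeas _
  have hpreσ : (fun ω => fun m : ℕ => B (σ m) ω) ⁻¹' cylinder s S
      = (fun ω => fun i : s => B (σ i) ω) ⁻¹' S := rfl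
  have hpreτ : (fun ω => fun m : ℕ => B (τ m) ω) ⁻¹' cylinder s S
      = (fun ω => fun i : s => B (τ i) ω) ⁻¹' S := rfl
  rw [Measure.map_apply hfσ hS.cylinder, Measure.map_apply hfτ hS.cylinder, hpreσ, hpreτ,
    ← Measure.map_apply hgσ hS, ← Measure.map_apply hgτ hS,
    finite_law_eq B hmeas hindep hident hσ hτ s]

end Aux

/-- Let `b ∈ (0,1)` and let `(B_t)_{t ∈ ℤ}` be i.i.d. real random variables with
`E[max(0, ln|B_0|)] < ∞`. Then for each `t` the series `R_t = Σ_{k=0}^∞ b^k B_{t−k}`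
converges almost surely, the process `(R_t)_{t ∈ ℤ}` is strictly stationary (the law of
`(R_{t+1}, …, R_{t+n})` does not depend on `t`), and it satisfies the recursion
`R_t = b R_{t−1} + B_t` for all `t` almost surely. -/
theorem stationary_AR1_from_iid
    {Ω : Type*} [MeasureSpace Ω] [IsProbabilityMeasure (ℙ : Measure Ω)]
    (b : ℝ) (hb : b ∈ Set.Ioo (0 : ℝ) 1)
    (B : ℤ → Ω → ℝ) (hmeas : ∀ t, Measurable (B t))
    (hindep : iIndepFun B ℙ)
    (hident : ∀ t, Measure.map (B t) ℙ = Measure.map (B 0) ℙ)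
    (hlog : Integrable (fun ω => max 0 (Real.log |B 0 ω|)) ℙ) :
    (∀ t : ℤ, ∀ᵐ ω ∂ℙ, Summable fun k : ℕ => b ^ k * B (t - (k : ℤ)) ω) ∧
    (∀ n : ℕ, ∀ t s : ℤ,
      Measure.map (fun ω => fun i : Fin n =>
        ∑' k : ℕ, b ^ k * B (t + 1 + (i : ℤ) - (k : ℤ)) ω) ℙ =
      Measure.map (fun ω => fun i : Fin n =>
        ∑' k : ℕ, b ^ k * B (s + 1 + (i : ℤ) - (k : ℤ)) ω) ℙ) ∧
    (∀ t : ℤ, ∀ᵐ ω ∂ℙ,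
      (∑' k : ℕ, b ^ k * B (t - (k : ℤ)) ω)
        = b * (∑' k : ℕ, b ^ k * B (t - 1 - (k : ℤ)) ω) + B t ω) := by
  obtain ⟨hb0, hb1⟩ := hb
  -- the geometric comparison constant
  set c : ℝ := (1 + b⁻¹) / 2 with hc
  have hbinv : 1 < b⁻¹ := by
    have h1 : b * b⁻¹ = 1 := mul_inv_cancel₀ hb0.ne'
    have h2 : 0 < b⁻¹ := inv_pos.2 hb0
    nlinarith
  have hc1 : 1 < c := by rw [hc]; linarith
  have hc0 : 0 < c := lt_trans one_pos hc1
  have hbc : b * c < 1 := by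
    have h1 : b * b⁻¹ = 1 := mul_inv_cancel₀ hb0.ne'
    have : b * c = (b + 1) / 2 := by rw [hc]; field_simp
    rw [this]; linarith
  have hbc0 : 0 ≤ b * c := le_of_lt (mul_pos hb0 hc0)
  -- Part 1: almost sure summability
  have h1 : ∀ t : ℤ, ∀ᵐ ω ∂ℙ, Summable fun k : ℕ => b ^ k * B (t - (k : ℤ)) ω := by
    intro t
    set A : ℕ → Set ℝ := fun k => {x | c ^ k < |x|} with hA
    have hAm : ∀ k, MeasurableSet (A k) :=
      fun k => measurableSet_lt measurable_const measurable_abs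
    set X : Ω → ℝ := fun ω => max 0 (Real.log |B 0 ω|) / Real.log c with hX
    have hlogc : 0 < Real.log c := Real.log_pos hc1
    have hXint : Integrable X ℙ := hlog.div_const _
    have hX0 : 0 ≤ X := fun ω => div_nonneg (le_max_left _ _) hlogc.le
    have htail : (∑' k : ℕ, ℙ (B (t - (k : ℤ)) ⁻¹' A k)) ≠ ⊤ := by
      have heq : ∀ k : ℕ, ℙ (B (t - (k : ℤ)) ⁻¹' A k) = ℙ (B 0 ⁻¹' A k) := by
        intro k
        rw [← Measure.map_apply (hmeas _) (hAm k), ← Measure.map_apply (hmeas 0) (hAm k),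
          hident]
      have hsub : ∀ k : ℕ, B 0 ⁻¹' A k ⊆ {ω | X ω ∈ Set.Ioi (k : ℝ)} := by
        intro k ω hω
        have hω' : c ^ k < |B 0 ω| := hω
        have h1' : (k : ℝ) * Real.log c < Real.log |B 0 ω| := by
          have hpow : Real.log (c ^ k) < Real.log |B 0 ω| :=
            Real.log_lt_log (pow_pos hc0 k) hω'
          simpa [Real.log_pow] using hpow
        have h2' : (k : ℝ) * Real.log c < max 0 (Real.log |B 0 ω|) :=
          h1'.trans_le (le_max_right _ _)
        simpa [hX, Set.mem_Ioi, lt_div_iff₀ hlogc] using h2'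
      refine ne_top_of_le_ne_top (tsum_prob_mem_Ioi_lt_top hXint hX0).ne ?_
      calc (∑' k : ℕ, ℙ (B (t - (k : ℤ)) ⁻¹' A k))
          = ∑' k : ℕ, ℙ (B 0 ⁻¹' A k) := tsum_congr heq
        _ ≤ ∑' k : ℕ, ℙ {ω | X ω ∈ Set.Ioi (k : ℝ)} :=
            ENNReal.tsum_le_tsum fun k => measure_mono (hsub k)
    have hae := MeasureTheory.ae_finite_setOf_mem (μ := (ℙ : Measure Ω))
      (s := fun k : ℕ => B (t - (k : ℤ)) ⁻¹' A k) htail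
    filter_upwards [hae] with ω hω
    have hev : ∀ᶠ k : ℕ in atTop, |B (t - (k : ℤ)) ω| ≤ c ^ k := by
      have h := (Set.finite_coe_iff.mp hω).eventually_cofinite_notMem
      rw [Nat.cofinite_eq_atTop] at h
      filter_upwards [h] with k hk
      simpa [hA, not_lt] using hk
    refine Summable.of_norm_bounded_eventually_nat
      (summable_geometric_of_lt_one hbc0 hbc) ?_
    filter_upwards [hev] with k hk
    rw [Real.norm_eq_abs, abs_mul, abs_pow, abs_of_pos hb0, mul_pow]
    exact mul_le_mul_of_nonneg_left hk (pow_nonneg hb0.le k)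
  refine ⟨h1, ?_, ?_⟩
  · -- Part 2: strict stationarity
    intro n t s
    set G : (ℕ → ℝ) → Fin n → ℝ := fun x i => ∑' k : ℕ, b ^ k * x (k + (n - 1 - i.1)) with hG
    have hGm : Measurable G := by
      refine measurable_pi_lambda _ fun i => ?_
      exact measurable_tsum_real fun k => (measurable_pi_apply _).const_mul _
    have key : ∀ u : ℤ,
        (fun ω => fun i : Fin n => ∑' k : ℕ, b ^ k * B (u + 1 + (i : ℤ) - (k : ℤ)) ω)
          = G ∘ (fun ω => fun m : ℕ => B (u + n - m) ω) := by
      intro u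
      funext ω
      funext i
      refine tsum_congr fun k => ?_
      have hi : (i : ℤ) < n := by exact_mod_cast i.isLt
      have hidx : u + 1 + (i : ℤ) - (k : ℤ) = u + (n : ℤ) - ((k + (n - 1 - i.1) : ℕ) : ℤ) := by
        have hi' : i.1 < n := i.isLt
        push_cast
        omega
      show b ^ k * B (u + 1 + (i : ℤ) - (k : ℤ)) ω
        = b ^ k * B (u + (n : ℤ) - ((k + (n - 1 - i.1) : ℕ) : ℤ)) ω
      rw [hidx]
    have hσinj : ∀ u : ℤ, Function.Injective (fun m : ℕ => u + (n : ℤ) - m) := by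
      intro u m1 m2 h
      simp only at h
      omega
    have hmap := seq_law_eq B hmeas hindep hident (hσinj t) (hσinj s)
    have hfσ : Measurable (fun ω => fun m : ℕ => B (t + n - m) ω) :=
      measurable_pi_lambda _ fun m => hmeas _
    have hfτ : Measurable (fun ω => fun m : ℕ => B (s + n - m) ω) :=
      measurable_pi_lambda _ fun m => hmeas _
    rw [key t, key s, ← Measure.map_map hGm hfσ, ← Measure.map_map hGm hfτ, hmap]
  · -- Part 3: the recursion
    intro t
    filter_upwards [h1 t, h1 (t - 1)] with ω hst hst1
    have hkey : ∀ k : ℕ, b ^ (k + 1) * B (t - ((k + 1 : ℕ) : ℤ)) ω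
        = b * (b ^ k * B (t - 1 - (k : ℤ)) ω) := by
      intro k
      have hidx : t - ((k + 1 : ℕ) : ℤ) = t - 1 - (k : ℤ) := by push_cast; ring
      rw [hidx, pow_succ]
      ring
    rw [hst.tsum_eq_zero_add]
    simp only [pow_zero, one_mul, Nat.cast_zero, sub_zero]
    rw [tsum_congr hkey, tsum_mul_left]
    ring
end

section
/- Let α be a real constant, β ∈ (0,1), b ∈ (0,1), and let (Z_t, W_t), t ∈ ℤ, be i.i.d. mean-zero random vectors in ℝ² with Z_1 integrable and E[e^{u W_1}] < ∞ for some u ∈ (0,1). Define the strictly stationary volatility process V_t = exp(α/(1−β) + Σ_{k=0}^∞ β^k W_{t−k}) and set B_t := a + c V_t + V_t Z_t for real constants a, c. Then E[max(0, ln|B_t|)] < ∞. -/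
open MeasureTheory ProbabilityTheory

/-- Measurability of a pointwise real `tsum`. -/
lemma measurable_tsum_real_s15 {Ω : Type*} [MeasurableSpace Ω] (g : ℕ → Ω → ℝ)
    (hg : ∀ k, Measurable (g k)) : Measurable (fun ω => ∑' k, g k ω) := by
  have hP : Measurable (fun ω => ∑' k, ENNReal.ofReal (g k ω)) :=
    Measurable.ennreal_tsum (fun k => ENNReal.measurable_ofReal.comp (hg k))
  have hM : Measurable (fun ω => ∑' k, ENNReal.ofReal (-(g k ω))) :=
    Measurable.ennreal_tsum (fun k => ENNReal.measurable_ofReal.comp ((hg k).neg))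
  have key : ∀ ω, (∑' k, g k ω) =
      if (∑' k, ENNReal.ofReal (g k ω)) ≠ ⊤ ∧ (∑' k, ENNReal.ofReal (-(g k ω))) ≠ ⊤ then
        (∑' k, ENNReal.ofReal (g k ω)).toReal - (∑' k, ENNReal.ofReal (-(g k ω))).toReal
      else 0 := by
    intro ω
    by_cases h : (∑' k, ENNReal.ofReal (g k ω)) ≠ ⊤ ∧ (∑' k, ENNReal.ofReal (-(g k ω))) ≠ ⊤
    · rw [if_pos h]
      obtain ⟨h1, h2⟩ := h
      have s1 : Summable (fun k => ((ENNReal.ofReal (g k ω)).toReal)) :=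
        ENNReal.summable_toReal h1
      have s2 : Summable (fun k => ((ENNReal.ofReal (-(g k ω))).toReal)) :=
        ENNReal.summable_toReal h2
      have e1 : (∑' k, ENNReal.ofReal (g k ω)).toReal
          = ∑' k, ((ENNReal.ofReal (g k ω)).toReal) :=
        ENNReal.tsum_toReal_eq (fun k => ENNReal.ofReal_ne_top)
      have e2 : (∑' k, ENNReal.ofReal (-(g k ω))).toReal
          = ∑' k, ((ENNReal.ofReal (-(g k ω))).toReal) :=
        ENNReal.tsum_toReal_eq (fun k => ENNReal.ofReal_ne_top)
      rw [e1, e2, ← Summable.tsum_sub s1 s2]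
      congr 1
      funext k
      rw [ENNReal.toReal_ofReal', ENNReal.toReal_ofReal']
      rcases le_total (g k ω) 0 with h | h
      · rw [max_eq_right h, max_eq_left (by linarith)]; linarith
      · rw [max_eq_left h, max_eq_right (by linarith)]; linarith
    · rw [if_neg h]
      apply tsum_eq_zero_of_not_summable
      intro hs
      apply h
      have habs : Summable (fun k => |g k ω|) := summable_abs_iff.mpr hs
      have hfin : ENNReal.ofReal (∑' k, |g k ω|) = ∑' k, ENNReal.ofReal |g k ω| :=
        ENNReal.ofReal_tsum_of_nonneg (fun k => abs_nonneg _) habs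
      constructor
      · exact (calc (∑' k, ENNReal.ofReal (g k ω)) ≤ ∑' k, ENNReal.ofReal |g k ω| :=
              ENNReal.tsum_le_tsum (fun k => ENNReal.ofReal_le_ofReal (le_abs_self _))
          _ = ENNReal.ofReal (∑' k, |g k ω|) := hfin.symm
          _ < ⊤ := ENNReal.ofReal_lt_top).ne
      · exact (calc (∑' k, ENNReal.ofReal (-(g k ω))) ≤ ∑' k, ENNReal.ofReal |g k ω| :=
              ENNReal.tsum_le_tsum (fun k => ENNReal.ofReal_le_ofReal (neg_le_abs _))
          _ = ENNReal.ofReal (∑' k, |g k ω|) := hfin.symm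
          _ < ⊤ := ENNReal.ofReal_lt_top).ne
  simp only [key]
  exact Measurable.ite
    (((hP (measurableSet_singleton ⊤).compl).inter (hM (measurableSet_singleton ⊤).compl)))
    (hP.ennreal_toReal.sub hM.ennreal_toReal) measurable_const

/-- Pure real inequality: positive part of the log is bounded. -/
lemma poslog_bound (a c m s z : ℝ) :
    max 0 (Real.log |a + c * Real.exp (m + s) + Real.exp (m + s) * z|)
      ≤ (Real.log (1 + |a|) + |c| + Real.log 2 + |m|) + |z| + max 0 s := by
  set x := a + c * Real.exp (m + s) + Real.exp (m + s) * z with hx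
  set p := |c| + |z| with hp
  set E := Real.exp (|m| + max 0 s) with hE
  have hpnn : 0 ≤ p := by positivity
  have hE1 : 1 ≤ E := Real.one_le_exp (by positivity)
  have hVle : Real.exp (m + s) ≤ E := by
    apply Real.exp_le_exp.mpr
    have := le_abs_self m
    have := le_max_right 0 s
    linarith [le_max_left (0:ℝ) s]
  have hVpos : 0 < Real.exp (m + s) := Real.exp_pos _
  have hxb : |x| ≤ |a| + p * E := by
    calc |x| ≤ |a| + |c * Real.exp (m + s)| + |Real.exp (m + s) * z| := by
          exact (abs_add_three _ _ _)
      _ = |a| + |c| * Real.exp (m + s) + Real.exp (m + s) * |z| := by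
          rw [abs_mul, abs_mul, abs_of_pos hVpos]
      _ ≤ |a| + |c| * E + E * |z| := by
          have h1 : |c| * Real.exp (m + s) ≤ |c| * E :=
            mul_le_mul_of_nonneg_left hVle (abs_nonneg _)
          have h2 : Real.exp (m + s) * |z| ≤ E * |z| :=
            mul_le_mul_of_nonneg_right hVle (abs_nonneg _)
          linarith
      _ = |a| + p * E := by ring
  have step1 : max 0 (Real.log |x|) ≤ Real.log (1 + |x|) := by
    apply max_le
    · exact Real.log_nonneg (by linarith [abs_nonneg x])
    · rcases le_or_gt |x| 1 with h | h
      · exact le_trans (Real.log_nonpos (abs_nonneg _) h)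
          (Real.log_nonneg (by linarith [abs_nonneg x]))
      · exact Real.log_le_log (by linarith) (by linarith)
  have step2 : 1 + |x| ≤ (1 + |a|) * ((1 + p) * (2 * E)) := by
    have hann : 0 ≤ |a| := abs_nonneg _
    nlinarith [mul_nonneg hann hpnn, mul_nonneg (mul_nonneg hann hpnn) (by linarith : (0:ℝ) ≤ E)]
  have step3 : Real.log (1 + |x|) ≤ Real.log ((1 + |a|) * ((1 + p) * (2 * E))) :=
    Real.log_le_log (by linarith [abs_nonneg x]) step2
  have h1a : (0:ℝ) < 1 + |a| := by linarith [abs_nonneg a]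
  have h1p : (0:ℝ) < 1 + p := by linarith
  have h2E : (0:ℝ) < 2 * E := by linarith
  have step4 : Real.log ((1 + |a|) * ((1 + p) * (2 * E)))
      = Real.log (1 + |a|) + Real.log (1 + p) + (Real.log 2 + (|m| + max 0 s)) := by
    rw [Real.log_mul h1a.ne' (by positivity), Real.log_mul h1p.ne' h2E.ne',
      Real.log_mul (by norm_num) (Real.exp_pos _).ne', Real.log_exp]
    ring
  have hlp : Real.log (1 + p) ≤ p := by
    have := Real.log_le_sub_one_of_pos h1p
    linarith
  calc max 0 (Real.log |x|) ≤ Real.log (1 + |x|) := step1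
    _ ≤ Real.log ((1 + |a|) * ((1 + p) * (2 * E))) := step3
    _ = Real.log (1 + |a|) + Real.log (1 + p) + (Real.log 2 + (|m| + max 0 s)) := step4
    _ ≤ (Real.log (1 + |a|) + |c| + Real.log 2 + |m|) + |z| + max 0 s := by
        rw [hp] at hlp; linarith

/-- Let `α` be real, `β ∈ (0,1)`, `b ∈ (0,1)`, and `(Z_t, W_t)`, `t ∈ ℤ`, i.i.d. mean-zero
random vectors in `ℝ²` with `Z₁` integrable and `E[e^{u W₁}] < ∞` for some `u ∈ (0,1)`.
Define the strictly stationary volatility process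
`V_t = exp(α/(1−β) + Σ_{k=0}^∞ β^k W_{t−k})` and set `B_t := a + c V_t + V_t Z_t` for real
constants `a, c`. Then `E[max(0, ln|B_t|)] < ∞`. -/
theorem integrable_pos_log_stationary_AR_noise
    {Ω : Type*} [MeasureSpace Ω] [IsProbabilityMeasure (ℙ : Measure Ω)]
    (α a c β b u : ℝ) (hβ : β ∈ Set.Ioo (0 : ℝ) 1) (hb : b ∈ Set.Ioo (0 : ℝ) 1)
    (hu : u ∈ Set.Ioo (0 : ℝ) 1)
    (ζ : ℤ → Ω → ℝ × ℝ) (hmeas : ∀ t, Measurable (ζ t))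
    (hindep : iIndepFun ζ ℙ)
    (hident : ∀ t, Measure.map (ζ t) ℙ = Measure.map (ζ 1) ℙ)
    (hmeanZ : (∫ ω, (ζ 1 ω).1 ∂ℙ) = 0) (hmeanW : (∫ ω, (ζ 1 ω).2 ∂ℙ) = 0)
    (hZint : Integrable (fun ω => (ζ 1 ω).1) ℙ)
    (hmgf : Integrable (fun ω => Real.exp (u * (ζ 1 ω).2)) ℙ) :
    ∀ t : ℤ, Integrable (fun ω => max 0 (Real.log
      |a + c * Real.exp (α / (1 - β) + ∑' k : ℕ, β ^ k * (ζ (t - (k : ℤ)) ω).2)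
        + Real.exp (α / (1 - β) + ∑' k : ℕ, β ^ k * (ζ (t - (k : ℤ)) ω).2)
          * (ζ t ω).1|)) ℙ := by
  obtain ⟨hβ0, hβ1⟩ := hβ
  obtain ⟨hu0, hu1⟩ := hu
  intro t
  -- notation
  set m : ℝ := α / (1 - β) with hm
  -- measurability of the W components and the tsum
  have hWmeas : ∀ k : ℕ, Measurable (fun ω => (ζ (t - (k : ℤ)) ω).2) :=
    fun k => measurable_snd.comp (hmeas _)
  have hSmeas : Measurable (fun ω => ∑' k : ℕ, β ^ k * (ζ (t - (k : ℤ)) ω).2) :=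
    measurable_tsum_real_s15 _ (fun k => (hWmeas k).const_mul _)
  have hZmeas : Measurable (fun ω => (ζ t ω).1) := measurable_fst.comp (hmeas t)
  -- measurability of the integrand
  have hfmeas : Measurable (fun ω => max 0 (Real.log
      |a + c * Real.exp (m + ∑' k : ℕ, β ^ k * (ζ (t - (k : ℤ)) ω).2)
        + Real.exp (m + ∑' k : ℕ, β ^ k * (ζ (t - (k : ℤ)) ω).2) * (ζ t ω).1|)) := by
    apply measurable_const.max
    apply Real.measurable_log.comp
    exact ((measurable_const.add ((hSmeas.const_add m).exp.const_mul c)).add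
        ((hSmeas.const_add m).exp.mul hZmeas)).abs
  -- ENNReal bound for positive parts of the W's
  set Wp : ℕ → Ω → ENNReal :=
    fun k ω => ENNReal.ofReal (β ^ k * max 0 ((ζ (t - (k : ℤ)) ω).2)) with hWp
  have hWpmeas : ∀ k, Measurable (Wp k) :=
    fun k => (((measurable_const.max (hWmeas k))).const_mul _).ennreal_ofReal
  set G : Ω → ENNReal := fun ω => ∑' k, Wp k ω with hG
  have hGmeas : Measurable G := Measurable.ennreal_tsum hWpmeas
  -- expected positive part of W is finite
  set K : ENNReal := ∫⁻ ω, ENNReal.ofReal (max 0 ((ζ 1 ω).2)) ∂ℙ with hK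
  have hKlt : K < ⊤ := by
    have hbound : ∀ ω, ENNReal.ofReal (max 0 ((ζ 1 ω).2))
        ≤ ENNReal.ofReal u⁻¹ * ENNReal.ofReal (Real.exp (u * (ζ 1 ω).2)) := by
      intro ω
      rw [← ENNReal.ofReal_mul (by positivity)]
      apply ENNReal.ofReal_le_ofReal
      apply max_le (by positivity)
      rcases le_or_gt ((ζ 1 ω).2) 0 with h | h
      · have : (0:ℝ) ≤ u⁻¹ * Real.exp (u * (ζ 1 ω).2) := by positivity
        linarith
      · have h1 : u * (ζ 1 ω).2 ≤ Real.exp (u * (ζ 1 ω).2) := by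
          have := Real.add_one_le_exp (u * (ζ 1 ω).2); linarith
        rw [← mul_le_mul_iff_right₀ hu0, mul_inv_cancel_left₀ hu0.ne']
        exact h1
      done
    calc K ≤ ∫⁻ ω, ENNReal.ofReal u⁻¹ * ENNReal.ofReal (Real.exp (u * (ζ 1 ω).2)) ∂ℙ :=
          lintegral_mono hbound
      _ = ENNReal.ofReal u⁻¹ * ∫⁻ ω, ENNReal.ofReal (Real.exp (u * (ζ 1 ω).2)) ∂ℙ :=
          lintegral_const_mul _
            ((Real.measurable_exp.comp ((measurable_snd.comp (hmeas 1)).const_mul u)).ennreal_ofReal)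
      _ < ⊤ := by
          apply ENNReal.mul_lt_top ENNReal.ofReal_lt_top
          have := hmgf.hasFiniteIntegral
          rw [HasFiniteIntegral] at this
          have heq : (∫⁻ ω, ENNReal.ofReal (Real.exp (u * (ζ 1 ω).2)) ∂ℙ)
              = ∫⁻ ω, (‖Real.exp (u * (ζ 1 ω).2)‖₊ : ENNReal) ∂ℙ :=
            lintegral_congr fun ω => (Real.enorm_eq_ofReal (Real.exp_nonneg _)).symm
          rw [heq]
          exact this
  -- each Wp has lintegral ofReal(β^k) * K, by identical distribution
  have hident' : ∀ s : ℤ, (∫⁻ ω, ENNReal.ofReal (max 0 ((ζ s ω).2)) ∂ℙ) = K := by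
    intro s
    have hmf : Measurable (fun x : ℝ × ℝ => ENNReal.ofReal (max 0 x.2)) :=
      (measurable_const.max measurable_snd).ennreal_ofReal
    rw [hK, ← lintegral_map hmf (hmeas s), ← lintegral_map hmf (hmeas 1), hident s]
  have hWpint : ∀ k : ℕ, (∫⁻ ω, Wp k ω ∂ℙ) = ENNReal.ofReal (β ^ k) * K := by
    intro k
    have : ∀ ω, Wp k ω = ENNReal.ofReal (β ^ k) * ENNReal.ofReal (max 0 ((ζ (t - (k:ℤ)) ω).2)) :=
      fun ω => ENNReal.ofReal_mul (by positivity)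
    simp only [this]
    rw [lintegral_const_mul _ ((measurable_const.max (hWmeas k)).ennreal_ofReal),
      hident' (t - (k:ℤ))]
  -- lintegral of G is finite
  have hGlt : (∫⁻ ω, G ω ∂ℙ) < ⊤ := by
    rw [hG]
    simp only
    rw [lintegral_tsum (fun k => (hWpmeas k).aemeasurable)]
    simp only [hWpint]
    rw [ENNReal.tsum_mul_right]
    apply ENNReal.mul_lt_top _ hKlt
    rw [← ENNReal.ofReal_tsum_of_nonneg (fun k => by positivity)
      (summable_geometric_of_lt_one hβ0.le hβ1)]
    exact ENNReal.ofReal_lt_top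
  -- the dominating function
  set C : ℝ := Real.log (1 + |a|) + |c| + Real.log 2 + |m| with hC
  have hGint : Integrable (fun ω => (G ω).toReal) ℙ :=
    integrable_toReal_of_lintegral_ne_top hGmeas.aemeasurable hGlt.ne
  have hZt : Integrable (fun ω => (ζ t ω).1) ℙ := by
    have h1 : Integrable (fun p : ℝ × ℝ => p.1) (Measure.map (ζ 1) ℙ) :=
      (integrable_map_measure measurable_fst.aestronglyMeasurable
        (hmeas 1).aemeasurable).mpr hZint
    have h2 : Integrable (fun p : ℝ × ℝ => p.1) (Measure.map (ζ t) ℙ) := by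
      rw [hident t]; exact h1
    exact (integrable_map_measure measurable_fst.aestronglyMeasurable
      (hmeas t).aemeasurable).mp h2
  have hDint : Integrable (fun ω => C + |(ζ t ω).1| + (G ω).toReal) ℙ :=
    ((integrable_const C).add hZt.abs).add hGint
  -- conclude via domination
  apply Integrable.mono' hDint hfmeas.aestronglyMeasurable
  have hae : ∀ᵐ ω ∂ℙ, G ω < ⊤ := ae_lt_top hGmeas hGlt.ne
  filter_upwards [hae] with ω hGω
  have hfnn : (0:ℝ) ≤ max 0 (Real.log
      |a + c * Real.exp (m + ∑' k : ℕ, β ^ k * (ζ (t - (k : ℤ)) ω).2)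
        + Real.exp (m + ∑' k : ℕ, β ^ k * (ζ (t - (k : ℤ)) ω).2) * (ζ t ω).1|) :=
    le_max_left _ _
  rw [Real.norm_of_nonneg hfnn]
  have step := poslog_bound a c m (∑' k : ℕ, β ^ k * (ζ (t - (k : ℤ)) ω).2) ((ζ t ω).1)
  -- bound the positive part of the tsum by (G ω).toReal
  have hq : ∀ k : ℕ, (Wp k ω).toReal = β ^ k * max 0 ((ζ (t - (k:ℤ)) ω).2) := by
    intro k
    rw [hWp]
    simp only
    rw [ENNReal.toReal_ofReal (by positivity)]
  have hqsum : Summable (fun k : ℕ => β ^ k * max 0 ((ζ (t - (k:ℤ)) ω).2)) := by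
    have := ENNReal.summable_toReal (f := fun k => Wp k ω) hGω.ne
    simpa only [hq] using this
  have hGtoReal : (G ω).toReal = ∑' k : ℕ, β ^ k * max 0 ((ζ (t - (k:ℤ)) ω).2) := by
    rw [hG]
    simp only
    rw [ENNReal.tsum_toReal_eq (fun k => ENNReal.ofReal_ne_top)]
    exact tsum_congr hq
  have htsum_le : max 0 (∑' k : ℕ, β ^ k * (ζ (t - (k : ℤ)) ω).2) ≤ (G ω).toReal := by
    rw [hGtoReal]
    apply max_le
    · exact tsum_nonneg (fun k => by positivity)
    · by_cases hs : Summable (fun k : ℕ => β ^ k * (ζ (t - (k:ℤ)) ω).2)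
      · apply Summable.tsum_le_tsum _ hs hqsum
        intro k
        exact mul_le_mul_of_nonneg_left (le_max_right 0 _) (by positivity)
      · rw [tsum_eq_zero_of_not_summable hs]
        exact tsum_nonneg (fun k => by positivity)
  calc max 0 (Real.log
      |a + c * Real.exp (m + ∑' k : ℕ, β ^ k * (ζ (t - (k : ℤ)) ω).2)
        + Real.exp (m + ∑' k : ℕ, β ^ k * (ζ (t - (k : ℤ)) ω).2) * (ζ t ω).1|)
      ≤ C + |(ζ t ω).1| + max 0 (∑' k : ℕ, β ^ k * (ζ (t - (k : ℤ)) ω).2) := step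
    _ ≤ C + |(ζ t ω).1| + (G ω).toReal := by linarith
end
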